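/- Define h(γ1) = [1 + cos(2γ1) + √2 sin γ1]² / [3 + cos(2γ1)]² for γ1 ∈ [π/4, π/2]. Then h is monotonically increasing on [π/4, π/2], its minimum is h(π/4) = 4/9, and this minimum is attained only at γ1 = π/4. -/
import Mathlib

open Real

private lemma key8 (γ : ℝ) :
    (1 + Real.cos (2*γ) + Real.sqrt 2 * Real.sin γ)^2 / (3 + Real.cos (2*γ))^2
      = (1 - 1/(2 + Real.sqrt 2 * Real.sin γ))^2 := by
  have hs1 : Real.sin γ ≤ 1 := Real.sin_le_one γ
  have hs2 : -1 ≤ Real.sin γ := Real.neg_one_le_sin γ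
  have hr2 : Real.sqrt 2 ^ 2 = 2 := Real.sq_sqrt (by norm_num)
  have hr : (1:ℝ) < Real.sqrt 2 := by nlinarith [Real.sqrt_nonneg 2]
  have hc : Real.cos (2*γ) = 1 - 2 * Real.sin γ ^ 2 := by
    rw [Real.cos_two_mul', Real.cos_sq']; ring
  set r := Real.sqrt 2 with hrdef
  set s := Real.sin γ with hsdef
  have hd1 : (0:ℝ) < 2 + r * s := by nlinarith
  have hd2 : (0:ℝ) < 3 + (1 - 2 * s ^ 2) := by nlinarith
  rw [hc]
  have hfrac : (1 + (1 - 2 * s ^ 2) + r * s) / (3 + (1 - 2 * s ^ 2))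
      = 1 - 1 / (2 + r * s) := by
    rw [eq_sub_iff_add_eq, div_add_div _ _ (ne_of_gt hd2) (ne_of_gt hd1),
      div_eq_one_iff_eq (by positivity)]
    linear_combination s ^ 2 * hr2
  rw [← hfrac, div_pow]

theorem stmt8 :
    let h : ℝ → ℝ := fun γ1 =>
      (1 + Real.cos (2*γ1) + Real.sqrt 2 * Real.sin γ1)^2 / (3 + Real.cos (2*γ1))^2
    (StrictMonoOn h (Set.Icc (π/4) (π/2)) ∧
      h (π/4) = 4/9 ∧
      (∀ γ1 ∈ Set.Icc (π/4) (π/2), 4/9 ≤ h γ1) ∧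
      (∀ γ1 ∈ Set.Icc (π/4) (π/2), h γ1 = 4/9 → γ1 = π/4)) := by
  intro h
  have hpi := Real.pi_pos
  have hr2 : Real.sqrt 2 ^ 2 = 2 := Real.sq_sqrt (by norm_num)
  have hr : (1:ℝ) < Real.sqrt 2 := by nlinarith [Real.sqrt_nonneg 2]
  have hmono : StrictMonoOn h (Set.Icc (π/4) (π/2)) := by
    intro a ha b hb hab
    have hsin : Real.sin a < Real.sin b :=
      Real.strictMonoOn_sin ⟨by linarith [ha.1], ha.2⟩ ⟨by linarith [hb.1], hb.2⟩ hab
    have hsa : 0 ≤ Real.sin a :=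
      Real.sin_nonneg_of_nonneg_of_le_pi (by linarith [ha.1]) (by linarith [ha.2])
    show (1 + Real.cos (2*a) + Real.sqrt 2 * Real.sin a)^2 / (3 + Real.cos (2*a))^2
        < (1 + Real.cos (2*b) + Real.sqrt 2 * Real.sin b)^2 / (3 + Real.cos (2*b))^2
    rw [key8, key8]
    set sa := Real.sin a
    set sb := Real.sin b
    have h1 : (0:ℝ) < 2 + Real.sqrt 2 * sa := by nlinarith
    have h2 : (0:ℝ) < 2 + Real.sqrt 2 * sb := by nlinarith
    have hu1 : 0 ≤ 1 - 1/(2 + Real.sqrt 2 * sa) := by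
      have : 1/(2 + Real.sqrt 2 * sa) ≤ 1 := by rw [div_le_one h1]; nlinarith
      linarith
    apply pow_lt_pow_left₀ _ hu1 (by norm_num)
    have hlt : 1/(2 + Real.sqrt 2 * sb) < 1/(2 + Real.sqrt 2 * sa) := by
      apply one_div_lt_one_div_of_lt h1; nlinarith
    linarith
  have hval : h (π/4) = 4/9 := by
    show (1 + Real.cos (2*(π/4)) + Real.sqrt 2 * Real.sin (π/4))^2
        / (3 + Real.cos (2*(π/4)))^2 = 4/9
    rw [key8, Real.sin_pi_div_four]
    have : Real.sqrt 2 * (Real.sqrt 2 / 2) = 1 := by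
      rw [mul_div_assoc', ← sq, hr2]; norm_num
    rw [this]; norm_num
  have hmem : π/4 ∈ Set.Icc (π/4) (π/2) := ⟨le_refl _, by linarith⟩
  refine ⟨hmono, hval, ?_, ?_⟩
  · intro γ hγ
    rcases eq_or_lt_of_le hγ.1 with heq | hlt
    · rw [← heq, hval]
    · have := hmono hmem hγ hlt
      linarith [hval ▸ this]
  · intro γ hγ hEq
    by_contra hne
    have hlt : π/4 < γ := lt_of_le_of_ne hγ.1 (Ne.symm hne)
    have := hmono hmem hγ hlt
    rw [hval, hEq] at this
    exact lt_irrefl _ this
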